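/- Let i ≥ 1 be a natural number and let Λ be any type. There is no view-distance-i verifier A over the label type Λ satisfying both: (error-tolerant completeness) for every n and every connected simple graph G on Fin n that contains a cycle, there exists an oracular labeling L_O : Fin n → Λ such that every labeling L : Fin n → Λ that differs from L_O at no more than i vertices satisfies A(G, L, v) = true for every vertex v; and (soundness) for every n ≥ 1 and every connected acyclic simple graph G on Fin n, for every labeling L : Fin n → Λ there exists a vertex v with A(G, L, v) = false. -/

import Mathlib

open SimpleGraph

/-! ### Auxiliary graphs: path and tadpole -/

/-- The path graph on `Fin n` (vertices `0, 1, …, n-1` in a row). -/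
private def PG (n : ℕ) : SimpleGraph (Fin n) where
  Adj a b := a.val + 1 = b.val ∨ b.val + 1 = a.val
  symm := by constructor; intro a b h; omega
  loopless := by constructor; intro a h; omega

/-- The tadpole graph on `Fin m`: the path `0—1—⋯—(m-1)` together with the extra
edge `{0,2}`, which creates the triangle `0,1,2` with a tail `2—3—⋯—(m-1)`. -/
private def TG (m : ℕ) : SimpleGraph (Fin m) where
  Adj a b := (a.val + 1 = b.val ∨ b.val + 1 = a.val) ∨
    (a.val = 0 ∧ b.val = 2) ∨ (b.val = 0 ∧ a.val = 2)
  symm := by constructor; intro a b h; rcases h with (h | h) | (h | h) <;> simp_all <;> omega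
  loopless := by constructor; intro a h; rcases h with (h | h) | (h | h) <;> omega

private lemma PG_adj {n : ℕ} (a b : Fin n) :
    (PG n).Adj a b ↔ (a.val + 1 = b.val ∨ b.val + 1 = a.val) := Iff.rfl

private lemma TG_adj {m : ℕ} (a b : Fin m) :
    (TG m).Adj a b ↔ ((a.val + 1 = b.val ∨ b.val + 1 = a.val) ∨
      (a.val = 0 ∧ b.val = 2) ∨ (b.val = 0 ∧ a.val = 2)) := Iff.rfl

/-! ### Walks, connectivity, distances -/

private lemma exists_walk_consec {N : ℕ} {G : SimpleGraph (Fin N)}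
    (hcons : ∀ a b : Fin N, a.val + 1 = b.val → G.Adj a b) :
    ∀ (k : ℕ) (a b : Fin N), b.val = a.val + k → ∃ w : G.Walk a b, w.length = k := by
  intro k
  induction k with
  | zero =>
    intro a b h
    obtain rfl : a = b := Fin.ext (by omega)
    exact ⟨Walk.nil, rfl⟩
  | succ k ih =>
    intro a b h
    have hb := b.isLt
    have ha' : a.val + 1 < N := by omega
    obtain ⟨w, hw⟩ := ih ⟨a.val + 1, ha'⟩ b (by simp; omega)
    exact ⟨Walk.cons (hcons _ _ rfl) w, by simp [hw]⟩

private lemma dist_le_consec {N : ℕ} {G : SimpleGraph (Fin N)}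
    (hcons : ∀ a b : Fin N, a.val + 1 = b.val → G.Adj a b)
    (a b : Fin N) (k : ℕ) (h1 : a.val ≤ b.val + k) (h2 : b.val ≤ a.val + k) :
    G.dist a b ≤ k := by
  rcases le_total a.val b.val with h | h
  · obtain ⟨w, hw⟩ := exists_walk_consec hcons (b.val - a.val) a b (by omega)
    exact le_trans (SimpleGraph.dist_le w) (by omega)
  · obtain ⟨w, hw⟩ := exists_walk_consec hcons (a.val - b.val) b a (by omega)
    rw [SimpleGraph.dist_comm]
    exact le_trans (SimpleGraph.dist_le w) (by omega)

private lemma connected_consec {N : ℕ} {G : SimpleGraph (Fin N)} (hN : 1 ≤ N)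
    (hcons : ∀ a b : Fin N, a.val + 1 = b.val → G.Adj a b) : G.Connected := by
  have h0 : ∀ a : Fin N, G.Reachable ⟨0, hN⟩ a := by
    intro a
    obtain ⟨w, _⟩ := exists_walk_consec hcons a.val ⟨0, hN⟩ a (by simp)
    exact ⟨w⟩
  rw [connected_iff]
  exact ⟨fun a b => (h0 a).symm.trans (h0 b), ⟨⟨0, hN⟩⟩⟩

private lemma walk_val_bound {N : ℕ} {G : SimpleGraph (Fin N)} (f : Fin N → ℕ)
    (hf : ∀ a b : Fin N, G.Adj a b → f a ≤ f b + 1 ∧ f b ≤ f a + 1) :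
    ∀ {a b : Fin N} (w : G.Walk a b), f a ≤ f b + w.length ∧ f b ≤ f a + w.length := by
  intro a b w
  induction w with
  | nil => simp
  | cons h w ih =>
    have := hf _ _ h
    rw [Walk.length_cons]
    omega

/-- Ball characterization in the path graph. -/
private lemma ball_PG {n : ℕ} (hn : 1 ≤ n) (i : ℕ) (j u : Fin n) :
    (PG n).dist j u ≤ i ↔ (j.val ≤ u.val + i ∧ u.val ≤ j.val + i) := by
  have hcons : ∀ a b : Fin n, a.val + 1 = b.val → (PG n).Adj a b := fun a b h => Or.inl h
  constructor
  · intro h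
    obtain ⟨w, hw⟩ :=
      ((connected_consec hn hcons).preconnected j u).exists_walk_length_eq_dist
    have hb := walk_val_bound Fin.val
      (fun a b hab => by rcases (PG_adj a b).1 hab with h' | h' <;> omega) w
    omega
  · intro h
    exact dist_le_consec hcons j u i h.1 h.2

/-- Ball characterization in the tadpole graph, for centers deep inside the tail. -/
private lemma ball_TG {m : ℕ} (hm : 1 ≤ m) (i : ℕ) (v u : Fin m) (hv : i + 3 ≤ v.val) :
    (TG m).dist v u ≤ i ↔ (v.val ≤ u.val + i ∧ u.val ≤ v.val + i) := by
  have hcons : ∀ a b : Fin m, a.val + 1 = b.val → (TG m).Adj a b :=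
    fun a b h => Or.inl (Or.inl h)
  constructor
  · intro h
    obtain ⟨w, hw⟩ :=
      ((connected_consec hm hcons).preconnected v u).exists_walk_length_eq_dist
    have hb := walk_val_bound (fun x => max x.val 1)
      (fun a b hab => by
        rcases (TG_adj a b).1 hab with (h' | h') | (⟨h1, h2⟩ | ⟨h1, h2⟩) <;>
          omega) w
    omega
  · intro h
    exact dist_le_consec hcons v u i h.1 h.2

/-! ### The path graph is acyclic, the tadpole is not -/

private lemma PG_crossing {n : ℕ} (a : Fin n) (ha : a.val + 1 < n) :
    ∀ {x y : Fin n} (w : (PG n).Walk x y), x.val ≤ a.val → a.val < y.val →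
      s(a, (⟨a.val + 1, ha⟩ : Fin n)) ∈ w.edges := by
  intro x y w
  induction w with
  | nil =>
    intro h1 h2
    exact absurd h2 (by omega)
  | @cons x x' y hadj w ih =>
    intro h1 h2
    rw [Walk.edges_cons, List.mem_cons]
    by_cases hx' : x'.val ≤ a.val
    · exact Or.inr (ih hx' h2)
    · left
      rcases (PG_adj x x').1 hadj with h | h
      · have hxa : x = a := Fin.ext (by omega)
        have hx'a : x' = ⟨a.val + 1, ha⟩ := Fin.ext (by simp only [Fin.val_mk]; omega)
        rw [hxa, hx'a]
      · exact absurd h (by omega)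

private lemma PG_acyclic (n : ℕ) : (PG n).IsAcyclic := by
  rw [isAcyclic_iff_forall_adj_isBridge]
  intro v w hvw
  rw [isBridge_iff_adj_and_forall_walk_mem_edges]
  intro p
  rcases (PG_adj v w).1 hvw with h | h
  · have hlt : v.val + 1 < n := by have := w.isLt; omega
    have hw : w = ⟨v.val + 1, hlt⟩ := Fin.ext (by simp only [Fin.val_mk]; omega)
    subst hw
    exact PG_crossing v hlt p (le_refl _) (by simp only [Fin.val_mk]; omega)
  · have hlt : w.val + 1 < n := by have := v.isLt; omega
    have hv' : v = ⟨w.val + 1, hlt⟩ := Fin.ext (by simp only [Fin.val_mk]; omega)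
    subst hv'
    have hmem := PG_crossing w hlt p.reverse (le_refl _) (by simp only [Fin.val_mk]; omega)
    rw [Walk.edges_reverse, List.mem_reverse] at hmem
    rw [Sym2.eq_swap]
    exact hmem

private lemma TG_cyclic (m : ℕ) (hm : 3 ≤ m) : ¬ (TG m).IsAcyclic := by
  intro h
  have h3 : (0:ℕ) < m := by omega
  have h01 : (TG m).Adj ⟨0, by omega⟩ ⟨1, by omega⟩ := Or.inl (Or.inl rfl)
  have h12 : (TG m).Adj ⟨1, by omega⟩ ⟨2, by omega⟩ := Or.inl (Or.inl rfl)
  have h20 : (TG m).Adj ⟨2, by omega⟩ ⟨0, by omega⟩ := Or.inr (Or.inr ⟨rfl, rfl⟩)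
  refine h (Walk.cons h01 (Walk.cons h12 (Walk.cons h20 Walk.nil))) ?_
  rw [Walk.isCycle_def]
  refine ⟨?_, by simp, ?_⟩
  · rw [Walk.isTrail_def]
    simp only [Walk.edges_cons, Walk.edges_nil, List.nodup_cons, List.mem_cons,
      List.not_mem_nil, or_false, List.nodup_nil, and_true, List.mem_singleton,
      Sym2.eq_iff, Fin.mk.injEq, not_or]
    norm_num
  · simp only [Walk.support_cons, Walk.support_nil, List.tail_cons, List.nodup_cons,
      List.mem_cons, List.not_mem_nil, or_false, List.nodup_nil, and_true,
      List.mem_singleton, Fin.mk.injEq, not_or]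
    norm_num

/-! ### Building ball isomorphisms -/

private def buildIso {n m : ℕ} {G : SimpleGraph (Fin n)} {G' : SimpleGraph (Fin m)}
    {S : Set (Fin n)} {S' : Set (Fin m)} (F : Fin n → Fin m) (F' : Fin m → Fin n)
    (hF : ∀ x : Fin n, x ∈ S → F x ∈ S') (hF' : ∀ y : Fin m, y ∈ S' → F' y ∈ S)
    (hl : ∀ x : Fin n, x ∈ S → F' (F x) = x) (hr : ∀ y : Fin m, y ∈ S' → F (F' y) = y)
    (hadj : ∀ x y : Fin n, x ∈ S → y ∈ S → (G'.Adj (F x) (F y) ↔ G.Adj x y)) :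
    G.induce S ≃g G'.induce S' where
  toFun x := ⟨F x.val, hF x.val x.property⟩
  invFun y := ⟨F' y.val, hF' y.val y.property⟩
  left_inv x := Subtype.ext (hl x.val x.property)
  right_inv y := Subtype.ext (hr y.val y.property)
  map_rel_iff' := @fun a b => hadj a.val b.val a.property b.property

/-! ### Counting -/

private lemma ncard_val_interval {m a b : ℕ} (S : Set (Fin m))
    (h : ∀ y ∈ S, a ≤ y.val ∧ y.val ≤ b) : S.ncard ≤ b + 1 - a := by
  have h1 : S.ncard = (Fin.val '' S).ncard :=
    (Set.ncard_image_of_injective S Fin.val_injective).symm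
  have h2 : Fin.val '' S ⊆ Set.Icc a b := by
    rintro _ ⟨y, hy, rfl⟩
    exact h y hy
  calc S.ncard = (Fin.val '' S).ncard := h1
    _ ≤ (Set.Icc a b).ncard := Set.ncard_le_ncard h2 (Set.finite_Icc a b)
    _ = b + 1 - a := by rw [← Finset.coe_Icc, Set.ncard_coe_finset, Nat.card_Icc]

/-! ### Statement -/

/-- `A` is a view-distance-`d` verifier over the label type `Λ`: its verdict at a
vertex is invariant under labeled pointed isomorphisms of radius-`d` balls. -/
def IsLocalVerifier (Λ : Type*) (d : ℕ)
    (A : ∀ n : ℕ, SimpleGraph (Fin n) → (Fin n → Λ) → Fin n → Bool) : Prop :=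
  ∀ (n n' : ℕ) (G : SimpleGraph (Fin n)) (G' : SimpleGraph (Fin n'))
    (L : Fin n → Λ) (L' : Fin n' → Λ) (v : Fin n) (v' : Fin n')
    (φ : G.induce {u | G.dist v u ≤ d} ≃g G'.induce {u | G'.dist v' u ≤ d})
    (hv : G.dist v v ≤ d),
    (↑(φ ⟨v, hv⟩) = v') →
    (∀ u : {u | G.dist v u ≤ d}, L' ↑(φ u) = L ↑u) →
    A n G L v = A n' G' L' v'

/-- Impossibility of error-resilient cycle detection: no view-distance-`i` verifier
tolerates `i` adversarial label errors in the whole graph, with any label type. -/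
theorem no_error_tolerant_cycle_detection (i : ℕ) (hi : 1 ≤ i) (Λ : Type) :
    ¬ ∃ A : ∀ n : ℕ, SimpleGraph (Fin n) → (Fin n → Λ) → Fin n → Bool,
      IsLocalVerifier Λ i A ∧
      (∀ (n : ℕ) (G : SimpleGraph (Fin n)), G.Connected → ¬ G.IsAcyclic →
        ∃ L_O : Fin n → Λ, ∀ L : Fin n → Λ,
          {v : Fin n | L v ≠ L_O v}.ncard ≤ i → ∀ v : Fin n, A n G L v = true) ∧
      (∀ (n : ℕ), 1 ≤ n → ∀ G : SimpleGraph (Fin n), G.Connected → G.IsAcyclic →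
        ∀ L : Fin n → Λ, ∃ v : Fin n, A n G L v = false) := by
  rintro ⟨A, hloc, hcomp, hsound⟩
  -- The tadpole on `4i+4` vertices is connected and has a cycle; get its oracle labeling.
  obtain ⟨LO, hLO⟩ := hcomp (4*i+4) (TG (4*i+4))
    (connected_consec (by omega) (fun a b h => Or.inl (Or.inl h)))
    (TG_cyclic (4*i+4) (by omega))
  -- The labeling of the path on `4i+2` vertices: fold the tail labels at the seam `2i`.
  set LH : Fin (4*i+2) → Λ := fun j =>
    if j.val ≤ 2*i then LO ⟨4*i+3 - j.val, by omega⟩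
    else LO ⟨j.val + 2, by have := j.isLt; omega⟩ with hLH
  have hballP : ∀ j u : Fin (4*i+2),
      ((PG (4*i+2)).dist j u ≤ i ↔ (j.val ≤ u.val + i ∧ u.val ≤ j.val + i)) :=
    fun j u => ball_PG (by omega) i j u
  -- every vertex of the path accepts
  have key : ∀ j : Fin (4*i+2), A (4*i+2) (PG (4*i+2)) LH j = true := by
    intro j
    have hjlt := j.isLt
    by_cases hj : j.val ≤ 2*i
    · -- left part: map reflected into the tail, leaf to leaf
      obtain ⟨vc, hvcval⟩ : ∃ v : Fin (4*i+4), v.val = 4*i+3 - j.val :=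
        ⟨⟨4*i+3 - j.val, by omega⟩, rfl⟩
      have hballT : ∀ u : Fin (4*i+4),
          ((TG (4*i+4)).dist vc u ≤ i ↔ (vc.val ≤ u.val + i ∧ u.val ≤ vc.val + i)) :=
        fun u => ball_TG (by omega) i vc u (by omega)
      set L' : Fin (4*i+4) → Λ := fun y =>
        if h : y.val + 2*i + 2 ≤ 4*i + 4 ∧ 4*i + 4 ≤ y.val + j.val + i + 1 then
          LH ⟨4*i+3 - y.val, by omega⟩ else LO y with hL'
      have hF : ∀ x : Fin (4*i+2), x ∈ {u : Fin (4*i+2) | (PG (4*i+2)).dist j u ≤ i} →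
          (⟨4*i+3 - x.val, by omega⟩ : Fin (4*i+4)) ∈
            {u : Fin (4*i+4) | (TG (4*i+4)).dist vc u ≤ i} := by
        intro x hx
        have hxb := (hballP j x).1 hx
        exact (hballT _).2 (by simp only [Fin.val_mk]; omega)
      have hFinv : ∀ y : Fin (4*i+4), y ∈ {u : Fin (4*i+4) | (TG (4*i+4)).dist vc u ≤ i} →
          (⟨min (4*i+3 - y.val) (4*i+1), by omega⟩ : Fin (4*i+2)) ∈
            {u : Fin (4*i+2) | (PG (4*i+2)).dist j u ≤ i} := by
        intro y hy
        have hyb := (hballT y).1 hy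
        have hylt := y.isLt
        exact (hballP j _).2 (by simp only [Fin.val_mk]; omega)
      have hli : ∀ x : Fin (4*i+2), x ∈ {u : Fin (4*i+2) | (PG (4*i+2)).dist j u ≤ i} →
          (⟨min (4*i+3 - (⟨4*i+3 - x.val, by omega⟩ : Fin (4*i+4)).val) (4*i+1), by omega⟩ :
            Fin (4*i+2)) = x := by
        intro x hx
        have hxb := (hballP j x).1 hx
        have hxlt := x.isLt
        exact Fin.ext (by simp only [Fin.val_mk]; omega)
      have hri : ∀ y : Fin (4*i+4), y ∈ {u : Fin (4*i+4) | (TG (4*i+4)).dist vc u ≤ i} →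
          (⟨4*i+3 - (⟨min (4*i+3 - y.val) (4*i+1), by omega⟩ : Fin (4*i+2)).val, by omega⟩ :
            Fin (4*i+4)) = y := by
        intro y hy
        have hyb := (hballT y).1 hy
        have hylt := y.isLt
        exact Fin.ext (by simp only [Fin.val_mk]; omega)
      have hadjp : ∀ x y : Fin (4*i+2),
          x ∈ {u : Fin (4*i+2) | (PG (4*i+2)).dist j u ≤ i} →
          y ∈ {u : Fin (4*i+2) | (PG (4*i+2)).dist j u ≤ i} →
          ((TG (4*i+4)).Adj ⟨4*i+3 - x.val, by omega⟩ ⟨4*i+3 - y.val, by omega⟩ ↔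
            (PG (4*i+2)).Adj x y) := by
        intro x y hx hy
        have hxb := (hballP j x).1 hx
        have hyb := (hballP j y).1 hy
        rw [TG_adj, PG_adj]
        simp only [Fin.val_mk]
        omega
      have hlab : ∀ u : {u : Fin (4*i+2) | (PG (4*i+2)).dist j u ≤ i},
          L' ⟨4*i+3 - (↑u : Fin (4*i+2)).val, by omega⟩ = LH ↑u := by
        rintro ⟨x, hx⟩
        have hxb := (hballP j x).1 hx
        have hxlt := x.isLt
        simp only [hL', hLH, Fin.val_mk]
        split_ifs with hc h1 h2 <;> first
          | (congr 1; exact Fin.ext (by simp only [Fin.val_mk]; omega))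
          | rfl
          | (exact absurd hc (by omega))
          | (exact absurd h1 (by omega))
          | (exact absurd h2 (by omega))
          | omega
      have hcard : {y : Fin (4*i+4) | L' y ≠ LO y}.ncard ≤ i := by
        have hsub : {y : Fin (4*i+4) | L' y ≠ LO y} ⊆
            {y : Fin (4*i+4) | 3*i+3 - j.val ≤ y.val ∧ y.val ≤ 2*i+2} := by
          intro y hy
          simp only [Set.mem_setOf_eq] at hy ⊢
          by_contra hcon
          exact hy (by simp only [hL']; exact dif_neg (by omega))
        exact le_trans (Set.ncard_le_ncard hsub (Set.toFinite _))
          (le_trans (ncard_val_interval _ (fun y hy => hy)) (by omega))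
      have hA := hloc (4*i+2) (4*i+4) (PG (4*i+2)) (TG (4*i+4)) LH L' j vc
        (buildIso (fun x => ⟨4*i+3 - x.val, by omega⟩)
          (fun y => ⟨min (4*i+3 - y.val) (4*i+1), by omega⟩) hF hFinv hli hri hadjp)
        (by simp [SimpleGraph.dist_self])
        (Fin.ext (show 4*i+3 - j.val = vc.val by omega)) hlab
      rw [hA]
      exact hLO L' hcard vc
    · -- right part: map shifted into the tail
      obtain ⟨vc, hvcval⟩ : ∃ v : Fin (4*i+4), v.val = j.val + 2 :=
        ⟨⟨j.val + 2, by omega⟩, rfl⟩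
      have hballT : ∀ u : Fin (4*i+4),
          ((TG (4*i+4)).dist vc u ≤ i ↔ (vc.val ≤ u.val + i ∧ u.val ≤ vc.val + i)) :=
        fun u => ball_TG (by omega) i vc u (by omega)
      set L' : Fin (4*i+4) → Λ := fun y =>
        if h : 2 ≤ y.val ∧ y.val ≤ 2*i + 2 ∧ j.val + 2 ≤ y.val + i then
          LH ⟨y.val - 2, by omega⟩ else LO y with hL'
      have hF : ∀ x : Fin (4*i+2), x ∈ {u : Fin (4*i+2) | (PG (4*i+2)).dist j u ≤ i} →
          (⟨x.val + 2, by have := x.isLt; omega⟩ : Fin (4*i+4)) ∈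
            {u : Fin (4*i+4) | (TG (4*i+4)).dist vc u ≤ i} := by
        intro x hx
        have hxb := (hballP j x).1 hx
        exact (hballT _).2 (by simp only [Fin.val_mk]; omega)
      have hFinv : ∀ y : Fin (4*i+4), y ∈ {u : Fin (4*i+4) | (TG (4*i+4)).dist vc u ≤ i} →
          (⟨y.val - 2, by have := y.isLt; omega⟩ : Fin (4*i+2)) ∈
            {u : Fin (4*i+2) | (PG (4*i+2)).dist j u ≤ i} := by
        intro y hy
        have hyb := (hballT y).1 hy
        have hylt := y.isLt
        exact (hballP j _).2 (by simp only [Fin.val_mk]; omega)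
      have hli : ∀ x : Fin (4*i+2), x ∈ {u : Fin (4*i+2) | (PG (4*i+2)).dist j u ≤ i} →
          (⟨(⟨x.val + 2, by have := x.isLt; omega⟩ : Fin (4*i+4)).val - 2,
            by have := x.isLt; omega⟩ : Fin (4*i+2)) = x := by
        intro x hx
        exact Fin.ext (by simp only [Fin.val_mk]; omega)
      have hri : ∀ y : Fin (4*i+4), y ∈ {u : Fin (4*i+4) | (TG (4*i+4)).dist vc u ≤ i} →
          (⟨(⟨y.val - 2, by have := y.isLt; omega⟩ : Fin (4*i+2)).val + 2,
            by have := y.isLt; omega⟩ : Fin (4*i+4)) = y := by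
        intro y hy
        have hyb := (hballT y).1 hy
        have hylt := y.isLt
        exact Fin.ext (by simp only [Fin.val_mk]; omega)
      have hadjp : ∀ x y : Fin (4*i+2),
          x ∈ {u : Fin (4*i+2) | (PG (4*i+2)).dist j u ≤ i} →
          y ∈ {u : Fin (4*i+2) | (PG (4*i+2)).dist j u ≤ i} →
          ((TG (4*i+4)).Adj ⟨x.val + 2, by have := x.isLt; omega⟩
              ⟨y.val + 2, by have := y.isLt; omega⟩ ↔ (PG (4*i+2)).Adj x y) := by
        intro x y hx hy
        have hxb := (hballP j x).1 hx
        have hyb := (hballP j y).1 hy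
        rw [TG_adj, PG_adj]
        simp only [Fin.val_mk]
        omega
      have hlab : ∀ u : {u : Fin (4*i+2) | (PG (4*i+2)).dist j u ≤ i},
          L' ⟨(↑u : Fin (4*i+2)).val + 2, by have := (↑u : Fin (4*i+2)).isLt; omega⟩ = LH ↑u := by
        rintro ⟨x, hx⟩
        have hxb := (hballP j x).1 hx
        have hxlt := x.isLt
        simp only [hL', hLH, Fin.val_mk]
        split_ifs with hc h1 h2 <;> first
          | (congr 1; exact Fin.ext (by simp only [Fin.val_mk]; omega))
          | rfl
          | (exact absurd hc (by omega))
          | (exact absurd h1 (by omega))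
          | (exact absurd h2 (by omega))
          | omega
      have hcard : {y : Fin (4*i+4) | L' y ≠ LO y}.ncard ≤ i := by
        have hsub : {y : Fin (4*i+4) | L' y ≠ LO y} ⊆
            {y : Fin (4*i+4) | j.val + 2 - i ≤ y.val ∧ y.val ≤ 2*i+2} := by
          intro y hy
          simp only [Set.mem_setOf_eq] at hy ⊢
          by_contra hcon
          exact hy (by simp only [hL']; exact dif_neg (by omega))
        exact le_trans (Set.ncard_le_ncard hsub (Set.toFinite _))
          (le_trans (ncard_val_interval _ (fun y hy => hy)) (by omega))
      have hA := hloc (4*i+2) (4*i+4) (PG (4*i+2)) (TG (4*i+4)) LH L' j vc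
        (buildIso (fun x => ⟨x.val + 2, by have := x.isLt; omega⟩)
          (fun y => ⟨y.val - 2, by have := y.isLt; omega⟩) hF hFinv hli hri hadjp)
        (by simp [SimpleGraph.dist_self])
        (Fin.ext (show j.val + 2 = vc.val by omega)) hlab
      rw [hA]
      exact hLO L' hcard vc
  -- soundness on the path gives a rejecting vertex: contradiction
  obtain ⟨w, hw⟩ := hsound (4*i+2) (by omega) (PG (4*i+2))
    (connected_consec (by omega) (fun a b h => Or.inl h)) (PG_acyclic _) LH
  rw [key w] at hw
  exact absurd hw (by simp)
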